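/- Let σ be a positive definite n×n Hermitian matrix with unit trace, and ρ = u diag(p) u† a density matrix with p a decreasing probability vector and u unitary. Define I(ρ‖σ) = Σ_{k=1}^n ( p_k log p_k − (p_k − p_{k+1}) log prim_k(u† σ u) ) with p_{n+1} = 0. Then inf_{u ∈ U(n)} I(u diag(p) u† ‖ σ) = D_KL(p‖q), where q is the decreasing eigenvalue vector of σ and D_KL(p‖q) = Σ_k p_k log(p_k/q_k). -/

import Mathlib

open scoped ComplexOrder
/-- The `k`-th principal minor (upper-left `k × k` subdeterminant) of a square matrix. -/
noncomputable def prim {n : ℕ} (A : Matrix (Fin n) (Fin n) ℂ) (k : ℕ) (hk : k ≤ n) : ℂ :=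
  (A.submatrix (Fin.castLE hk) (Fin.castLE hk)).det

/-- The value `p_{k+1}`, with the convention `p_{n+1} = 0`. -/
noncomputable def pnext {n : ℕ} (p : Fin n → ℝ) (k : Fin n) : ℝ :=
  if h : (k : ℕ) + 1 < n then p ⟨(k : ℕ) + 1, h⟩ else 0

/-- The Keyl rate function `I(u diag(p) u† ‖ σ)
  = Σ_k ( p_k log p_k − (p_k − p_{k+1}) log prim_k(u† σ u) )`. -/
noncomputable def keylRate {n : ℕ} (σ : Matrix (Fin n) (Fin n) ℂ) (p : Fin n → ℝ)
    (u : Matrix (Fin n) (Fin n) ℂ) : ℝ :=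
  ∑ k : Fin n, (p k * Real.log (p k) -
    (p k - pnext p k) * Real.log ((prim (star u * σ * u) ((k : ℕ) + 1) k.isLt).re))


section KeylAux

open Finset Matrix Equiv
-- expansion lemma
lemma det_mul_expand {m n : ℕ} (A : Matrix (Fin m) (Fin n) ℂ) (B : Matrix (Fin n) (Fin m) ℂ) :
    (A * B).det = ∑ g : Fin m → Fin n, (A.submatrix id g).det * ∏ i, B (g i) i := by
  calc (A * B).det
      = ∑ σ : Equiv.Perm (Fin m), Equiv.Perm.sign σ •
          ∑ g : Fin m → Fin n, ∏ i, A (σ i) (g i) * B (g i) i := by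
        simp only [Matrix.det_apply, Matrix.mul_apply, Finset.prod_univ_sum,
          Fintype.piFinset_univ]
    _ = ∑ g : Fin m → Fin n, ∑ σ : Equiv.Perm (Fin m),
          Equiv.Perm.sign σ • ∏ i, A (σ i) (g i) * B (g i) i := by
        simp only [Finset.smul_sum]
        exact Finset.sum_comm
    _ = ∑ g : Fin m → Fin n, (A.submatrix id g).det * ∏ i, B (g i) i := by
        refine Finset.sum_congr rfl fun g _ => ?_
        rw [Matrix.det_apply, Finset.sum_mul]
        refine Finset.sum_congr rfl fun σ _ => ?_
        simp only [Finset.prod_mul_distrib, Matrix.submatrix_apply, id_eq, smul_mul_assoc]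
open Finset Matrix Equiv

lemma strictMono_fin_le {m n : ℕ} {f : Fin m → Fin n} (hf : StrictMono f) (i : Fin m) :
    (i : ℕ) ≤ (f i : ℕ) := by
  suffices H : ∀ v : ℕ, ∀ i : Fin m, (i : ℕ) = v → v ≤ (f i : ℕ) from H _ i rfl
  intro v
  induction v with
  | zero => intro i _; exact Nat.zero_le _
  | succ j ih =>
    intro i hi
    have hj : j < m := by omega
    have h1 : (⟨j, hj⟩ : Fin m) < i := by simp [Fin.lt_def, hi]
    have h2 := hf h1
    have h3 := ih ⟨j, hj⟩ rfl
    simp only [Fin.lt_def] at h2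
    omega

noncomputable instance {m n : ℕ} : Fintype {h : Fin m → Fin n // StrictMono h} := by
  classical exact Subtype.fintype _

noncomputable def groupEquiv (m n : ℕ) :
    {h : Fin m → Fin n // StrictMono h} × Equiv.Perm (Fin m) ≃
      {g : Fin m → Fin n // Function.Injective g} := by
  classical
  refine Equiv.ofBijective
    (fun x => ⟨x.1.1 ∘ x.2, x.1.2.injective.comp x.2.injective⟩) ⟨?_, ?_⟩
  · rintro ⟨⟨h₁, hs₁⟩, π₁⟩ ⟨⟨h₂, hs₂⟩, π₂⟩ heq
    have heq' : h₁ ∘ ⇑π₁ = h₂ ∘ ⇑π₂ := congrArg Subtype.val heq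
    have hr : h₁ = h₂ := by
      haveI : WellFoundedLT (Fin m) := inferInstance
      refine (StrictMono.range_inj (β := Fin m) (γ := Fin n) hs₁ hs₂).mp ?_
      rw [← π₁.surjective.range_comp h₁, ← π₂.surjective.range_comp h₂, heq']
    subst hr
    have hπ : π₁ = π₂ := by
      ext i
      exact congrArg Fin.val (hs₁.injective (congrFun heq' i))
    simp [hπ]
  · rintro ⟨g, hg⟩
    set S : Finset (Fin n) := Finset.image g Finset.univ with hS
    have hcard : S.card = m := by
      rw [hS, Finset.card_image_of_injective _ hg, Finset.card_univ, Fintype.card_fin]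
    set e₁ := S.orderIsoOfFin hcard with he₁
    have hmem : ∀ i, g i ∈ S := fun i => Finset.mem_image_of_mem _ (Finset.mem_univ i)
    have hbij : Function.Bijective (fun i => (⟨g i, hmem i⟩ : {x // x ∈ S})) := by
      rw [Fintype.bijective_iff_injective_and_card]
      constructor
      · intro a b hab
        exact hg (congrArg Subtype.val hab)
      · simp [Fintype.card_coe, hcard]
    set g' : Fin m ≃ {x // x ∈ S} := Equiv.ofBijective _ hbij with hg'
    refine ⟨⟨⟨fun i => (e₁ i : Fin n), ?_⟩, g'.trans e₁.toEquiv.symm⟩, ?_⟩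
    · exact fun a b hab => e₁.strictMono hab
    · ext i
      show (((e₁ ((g'.trans e₁.symm) i)) : Fin n) : ℕ) = ((g i : Fin n) : ℕ)
      have : (g'.trans e₁.symm) i = e₁.symm (g' i) := rfl
      rw [this, OrderIso.apply_symm_apply]
      rfl

lemma det_conj_diag {n m : ℕ} (d : Fin n → ℝ) (M : Matrix (Fin n) (Fin m) ℂ) :
    (Mᴴ * Matrix.diagonal (fun a => (d a : ℂ)) * M).det
      = ((∑ h : {h : Fin m → Fin n // StrictMono h},
          (∏ i, d (h.1 i)) * Complex.normSq ((M.submatrix h.1 id).det) : ℝ) : ℂ) := by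
  classical
  set F : (Fin m → Fin n) → ℂ := fun g =>
    (starRingEnd ℂ) ((M.submatrix g id).det) * (∏ j, (d (g j) : ℂ)) * ∏ i, M (g i) i with hF
  have h1 : (Mᴴ * Matrix.diagonal (fun a => (d a : ℂ)) * M).det = ∑ g : Fin m → Fin n, F g := by
    rw [det_mul_expand]
    refine Finset.sum_congr rfl fun g _ => ?_
    have hsub : (Mᴴ * Matrix.diagonal (fun a => (d a : ℂ))).submatrix id g
        = (M.submatrix g id)ᴴ * Matrix.diagonal (fun j => (d (g j) : ℂ)) := by
      ext i j
      simp [Matrix.mul_diagonal, Matrix.submatrix_apply, Matrix.conjTranspose_apply]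
    rw [hsub, Matrix.det_mul, Matrix.det_conjTranspose, Matrix.det_diagonal, hF]
    rfl
  have hzero : ∀ g : Fin m → Fin n, ¬ Function.Injective g → F g = 0 := by
    intro g hg
    rw [Function.not_injective_iff] at hg
    obtain ⟨i, j, hij, hne⟩ := hg
    have : (M.submatrix g id).det = 0 := by
      refine Matrix.det_zero_of_row_eq hne ?_
      funext a
      simp [Matrix.submatrix_apply, hij]
    simp [hF, this]
  have h2 : ∑ g : Fin m → Fin n, F g = ∑ g : {g : Fin m → Fin n // Function.Injective g}, F g.1 := by
    rw [← Finset.sum_subtype (Finset.univ.filter (fun g : Fin m → Fin n => Function.Injective g))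
      (by simp) F]
    rw [Finset.sum_filter_of_ne]
    intro g _ hFg
    by_contra hinj
    exact hFg (hzero g hinj)
  have h3 : ∑ g : {g : Fin m → Fin n // Function.Injective g}, F g.1
      = ∑ x : {h : Fin m → Fin n // StrictMono h} × Equiv.Perm (Fin m),
          F ((groupEquiv m n) x).1 :=
    (Fintype.sum_equiv (groupEquiv m n) _ _ fun x => rfl).symm
  have h4 : ∀ h : {h : Fin m → Fin n // StrictMono h}, ∀ π : Equiv.Perm (Fin m),
      F (h.1 ∘ π) = (((Equiv.Perm.sign π : ℤ) : ℂ)) *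
        ((starRingEnd ℂ) ((M.submatrix h.1 id).det) * (∏ j, (d (h.1 j) : ℂ)) *
          ∏ i, M (h.1 (π i)) i) := by
    intro h π
    have hsub2 : M.submatrix (h.1 ∘ π) id = (M.submatrix h.1 id).submatrix π id := by
      rw [Matrix.submatrix_submatrix]
      rfl
    have hdet : (M.submatrix (h.1 ∘ π) id).det
        = ((Equiv.Perm.sign π : ℤ) : ℂ) * (M.submatrix h.1 id).det := by
      rw [hsub2, Matrix.det_permute]
    have hprod : (∏ j, (d (h.1 (π j)) : ℂ)) = ∏ j, (d (h.1 j) : ℂ) :=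
      Equiv.prod_comp π (fun j => (d (h.1 j) : ℂ))
    rw [hF]
    simp only [Function.comp_apply, hprod]
    rw [hdet, RingHom.map_mul, map_intCast]
    ring
  have h5 : ∀ h : {h : Fin m → Fin n // StrictMono h},
      ∑ π : Equiv.Perm (Fin m), F (h.1 ∘ π)
        = (∏ j, (d (h.1 j) : ℂ)) * ((Complex.normSq ((M.submatrix h.1 id).det) : ℝ) : ℂ) := by
    intro h
    simp only [h4]
    have hre : ∀ π : Equiv.Perm (Fin m),
        (((Equiv.Perm.sign π : ℤ) : ℂ)) *
          ((starRingEnd ℂ) ((M.submatrix h.1 id).det) * (∏ j, (d (h.1 j) : ℂ)) *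
            ∏ i, M (h.1 (π i)) i)
        = ((starRingEnd ℂ) ((M.submatrix h.1 id).det) * (∏ j, (d (h.1 j) : ℂ))) *
            ((((Equiv.Perm.sign π : ℤ) : ℂ)) * ∏ i, M (h.1 (π i)) i) := fun π => by ring
    simp_rw [hre]
    rw [← Finset.mul_sum]
    have hdet' : (∑ π : Equiv.Perm (Fin m),
        (((Equiv.Perm.sign π : ℤ) : ℂ)) * ∏ i, M (h.1 (π i)) i)
        = (M.submatrix h.1 id).det := by
      rw [Matrix.det_apply']
      refine Finset.sum_congr rfl fun π _ => ?_
      simp [Matrix.submatrix_apply]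
    rw [hdet', ← Complex.mul_conj]
    ring
  rw [h1, h2, h3, Fintype.sum_prod_type]
  have h6 : ∀ h : {h : Fin m → Fin n // StrictMono h},
      (∑ π : Equiv.Perm (Fin m), F ((groupEquiv m n) (h, π)).1)
        = (∏ j, (d (h.1 j) : ℂ)) * ((Complex.normSq ((M.submatrix h.1 id).det) : ℝ) : ℂ) :=
    fun h => Eq.trans (Finset.sum_congr rfl fun π _ => rfl) (h5 h)
  rw [Finset.sum_congr rfl fun h _ => h6 h, Complex.ofReal_sum]
  exact Finset.sum_congr rfl fun h _ => by push_cast; ring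

lemma det_conj_diag_re {n m : ℕ} (d : Fin n → ℝ) (hd : ∀ i, 0 < d i) (hmono : Antitone d)
    (hm : m ≤ n) (M : Matrix (Fin n) (Fin m) ℂ) (hM : Mᴴ * M = 1) :
    0 < (Mᴴ * Matrix.diagonal (fun a => (d a : ℂ)) * M).det.re ∧
      (Mᴴ * Matrix.diagonal (fun a => (d a : ℂ)) * M).det.re
        ≤ ∏ i : Fin m, d (Fin.castLE hm i) := by
  classical
  have hre : (Mᴴ * Matrix.diagonal (fun a => (d a : ℂ)) * M).det.re
      = ∑ h : {h : Fin m → Fin n // StrictMono h},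
          (∏ i, d (h.1 i)) * Complex.normSq ((M.submatrix h.1 id).det) := by
    rw [det_conj_diag]
    exact Complex.ofReal_re _
  have hunit : ∑ h : {h : Fin m → Fin n // StrictMono h},
      Complex.normSq ((M.submatrix h.1 id).det) = 1 := by
    have h1 := det_conj_diag (fun _ => (1 : ℝ)) M
    have h2 : Matrix.diagonal (fun _ : Fin n => ((1 : ℝ) : ℂ)) = 1 := by
      simp [Matrix.diagonal_one]
    rw [h2, Matrix.mul_one, hM, Matrix.det_one] at h1
    have h3 := congrArg Complex.re h1
    simp only [Complex.one_re, Complex.ofReal_re, Finset.prod_const_one, one_mul] at h3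
    exact h3.symm
  constructor
  · have hex : ∃ h : {h : Fin m → Fin n // StrictMono h},
        Complex.normSq ((M.submatrix h.1 id).det) ≠ 0 := by
      by_contra hall
      push_neg at hall
      rw [Finset.sum_eq_zero (fun h _ => hall h)] at hunit
      norm_num at hunit
    obtain ⟨h0, hh0⟩ := hex
    rw [hre]
    refine Finset.sum_pos' (fun h _ => mul_nonneg (Finset.prod_nonneg fun i _ => (hd _).le)
      (Complex.normSq_nonneg _)) ⟨h0, Finset.mem_univ _, ?_⟩
    exact mul_pos (Finset.prod_pos fun i _ => hd _)
      (lt_of_le_of_ne (Complex.normSq_nonneg _) (Ne.symm hh0))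
  · rw [hre]
    calc ∑ h : {h : Fin m → Fin n // StrictMono h},
            (∏ i, d (h.1 i)) * Complex.normSq ((M.submatrix h.1 id).det)
        ≤ ∑ h : {h : Fin m → Fin n // StrictMono h},
            (∏ i : Fin m, d (Fin.castLE hm i)) * Complex.normSq ((M.submatrix h.1 id).det) := by
          refine Finset.sum_le_sum fun h _ => ?_
          refine mul_le_mul_of_nonneg_right ?_ (Complex.normSq_nonneg _)
          refine Finset.prod_le_prod (fun i _ => (hd _).le) (fun i _ => ?_)
          refine hmono ?_
          rw [Fin.le_def]
          simpa using strictMono_fin_le h.2 i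
      _ = ∏ i : Fin m, d (Fin.castLE hm i) := by
          rw [← Finset.mul_sum, hunit, mul_one]

lemma tele_nat (g f : ℕ → ℝ) : ∀ m : ℕ,
    ∑ k ∈ Finset.range m, (g k - g (k + 1)) * (∑ j ∈ Finset.range (k + 1), f j)
      = ∑ k ∈ Finset.range m, g k * f k - g m * ∑ j ∈ Finset.range m, f j := by
  intro m
  induction m with
  | zero => simp
  | succ m ih =>
    rw [Finset.sum_range_succ, ih, Finset.sum_range_succ (fun k => g k * f k),
      Finset.sum_range_succ f]
    ring

lemma abel_sum {n : ℕ} (p f : Fin n → ℝ) :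
    ∑ k : Fin n, (p k - pnext p k) * (∑ i : Fin ((k : ℕ) + 1), f (Fin.castLE k.isLt i))
      = ∑ k : Fin n, p k * f k := by
  classical
  set gg : ℕ → ℝ := fun j => if h : j < n then p ⟨j, h⟩ else 0 with hgg
  set ff : ℕ → ℝ := fun j => if h : j < n then f ⟨j, h⟩ else 0 with hff
  have hL : ∑ k : Fin n, (p k - pnext p k) * (∑ i : Fin ((k : ℕ) + 1), f (Fin.castLE k.isLt i))
      = ∑ k ∈ Finset.range n, (gg k - gg (k + 1)) * (∑ j ∈ Finset.range (k + 1), ff j) := by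
    rw [← Fin.sum_univ_eq_sum_range (fun j => (gg j - gg (j + 1)) * (∑ i ∈ Finset.range (j + 1), ff i)) n]
    refine Finset.sum_congr rfl fun k _ => ?_
    have h1 : gg (k : ℕ) = p k := by
      rw [hgg]; simp [k.isLt]
    have h2 : gg ((k : ℕ) + 1) = pnext p k := by
      rw [hgg, pnext]
    have h3 : ∑ i : Fin ((k : ℕ) + 1), f (Fin.castLE k.isLt i)
        = ∑ j ∈ Finset.range ((k : ℕ) + 1), ff j := by
      rw [← Fin.sum_univ_eq_sum_range (fun j => ff j) ((k : ℕ) + 1)]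
      refine Finset.sum_congr rfl fun i _ => ?_
      have hi : (i : ℕ) < n := lt_of_lt_of_le i.isLt k.isLt
      rw [hff]
      simp only [hi, dif_pos]
      rfl
    rw [h1, h2, h3]
  have hR : ∑ k : Fin n, p k * f k = ∑ k ∈ Finset.range n, gg k * ff k := by
    rw [← Fin.sum_univ_eq_sum_range (fun j => gg j * ff j) n]
    refine Finset.sum_congr rfl fun k _ => ?_
    rw [hgg, hff]
    simp [k.isLt]
  rw [hL, hR, tele_nat]
  have : gg n = 0 := by rw [hgg]; simp
  rw [this]
  ring

open scoped ComplexOrder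

lemma conj_diag_submatrix {n k : ℕ} (V : Matrix (Fin n) (Fin n) ℂ) (e : Fin n → ℂ) (hk : k ≤ n) :
    (star V * Matrix.diagonal e * V).submatrix (Fin.castLE hk) (Fin.castLE hk)
      = (V.submatrix id (Fin.castLE hk))ᴴ * Matrix.diagonal e * V.submatrix id (Fin.castLE hk) := by
  ext i j
  simp only [Matrix.submatrix_apply, Matrix.mul_apply, Matrix.mul_diagonal,
    Matrix.conjTranspose_apply, Matrix.star_apply, id_eq]

lemma MhM_one {n k : ℕ} (V : Matrix (Fin n) (Fin n) ℂ) (hV : star V * V = 1) (hk : k ≤ n) :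
    (V.submatrix id (Fin.castLE hk))ᴴ * V.submatrix id (Fin.castLE hk) = 1 := by
  ext i j
  have h : (star V * V) (Fin.castLE hk i) (Fin.castLE hk j)
      = (1 : Matrix (Fin n) (Fin n) ℂ) (Fin.castLE hk i) (Fin.castLE hk j) := by rw [hV]
  simp only [Matrix.mul_apply, Matrix.star_apply, Matrix.one_apply, Fin.castLE_inj] at h
  simp only [Matrix.mul_apply, Matrix.conjTranspose_apply, Matrix.submatrix_apply, id_eq,
    Matrix.one_apply, Matrix.star_apply]
  exact h

lemma q_pos {n : ℕ} (σ : Matrix (Fin n) (Fin n) ℂ) (hσ : σ.PosDef) (q : Fin n → ℝ)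
    (w : Matrix (Fin n) (Fin n) ℂ) (hw : w ∈ Matrix.unitaryGroup (Fin n) ℂ)
    (hwσ : star w * σ * w = Matrix.diagonal (fun i => (q i : ℂ))) : ∀ i, 0 < q i := by
  have hw1 : star w * w = 1 := (Matrix.mem_unitaryGroup_iff'.mp hw)
  have hpd : (Matrix.diagonal (fun i => (q i : ℂ))).PosDef := by
    rw [← hwσ]
    rw [Matrix.posDef_iff_dotProduct_mulVec]
    constructor
    · have := Matrix.isHermitian_conjTranspose_mul_mul w hσ.isHermitian
      rwa [Matrix.star_eq_conjTranspose]
    · intro x hx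
      have hwx : w *ᵥ x ≠ 0 := by
        intro h0
        apply hx
        have : (star w * w) *ᵥ x = star w *ᵥ (w *ᵥ x) := (Matrix.mulVec_mulVec _ _ _).symm
        rw [hw1, Matrix.one_mulVec, h0, Matrix.mulVec_zero] at this
        exact this
      have := (Matrix.posDef_iff_dotProduct_mulVec.mp hσ).2 hwx
      simpa only [Matrix.star_mulVec, Matrix.dotProduct_mulVec, Matrix.vecMul_vecMul,
        Matrix.star_eq_conjTranspose, Matrix.mul_assoc] using this
  intro i
  exact Complex.zero_lt_real.mp (Matrix.posDef_diagonal_iff.mp hpd i)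

end KeylAux

open Finset Matrix in
/-- For a positive definite unit-trace `σ` with decreasing eigenvalue
vector `q` and a decreasing probability vector `p`,
`inf_{u ∈ U(n)} I(u diag(p) u† ‖ σ) = D_KL(p‖q)`. -/
theorem stmt_17 {n : ℕ} (σ : Matrix (Fin n) (Fin n) ℂ) (hσ : σ.PosDef)
    (htr : σ.trace = 1) (q : Fin n → ℝ) (hq : Antitone q)
    (hdiag : ∃ w ∈ Matrix.unitaryGroup (Fin n) ℂ,
      star w * σ * w = Matrix.diagonal (fun i => (q i : ℂ)))
    (p : Fin n → ℝ) (hp0 : ∀ k, 0 ≤ p k) (hp1 : ∑ k, p k = 1) (hp : Antitone p) :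
    (⨅ u : Matrix.unitaryGroup (Fin n) ℂ, keylRate σ p (u : Matrix (Fin n) (Fin n) ℂ)) =
      ∑ k, p k * Real.log (p k / q k) := by
  classical
  obtain ⟨w, hw, hwσ⟩ := hdiag
  have hq0 : ∀ i, 0 < q i := q_pos σ hσ q w hw hwσ
  have hw1 : star w * w = 1 := Matrix.mem_unitaryGroup_iff'.mp hw
  have hw2 : w * star w = 1 := Matrix.mem_unitaryGroup_iff.mp hw
  have hσw : σ = w * Matrix.diagonal (fun i => (q i : ℂ)) * star w := by
    rw [← hwσ]
    calc σ = (w * star w) * σ * (w * star w) := by rw [hw2, one_mul, mul_one]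
      _ = w * (star w * σ * w) * star w := by simp only [Matrix.mul_assoc]
  set D : Matrix (Fin n) (Fin n) ℂ := Matrix.diagonal (fun i => (q i : ℂ)) with hD
  have hc : ∀ k : Fin n, 0 ≤ p k - pnext p k := by
    intro k
    rw [sub_nonneg, pnext]
    split_ifs with h
    · exact hp (by rw [Fin.le_def]; simp)
    · exact hp0 k
  set KL : ℝ := ∑ k, p k * Real.log (p k / q k) with hKL
  have hlogP : ∀ k : Fin n,
      Real.log (∏ i : Fin ((k : ℕ) + 1), q (Fin.castLE k.isLt i))
        = ∑ i : Fin ((k : ℕ) + 1), Real.log (q (Fin.castLE k.isLt i)) :=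
    fun k => Real.log_prod (fun i _ => (hq0 _).ne')
  have hval : ∑ k : Fin n, (p k * Real.log (p k)
      - (p k - pnext p k) * Real.log (∏ i : Fin ((k : ℕ) + 1), q (Fin.castLE k.isLt i))) = KL := by
    have habel := abel_sum p (fun i => Real.log (q i))
    rw [Finset.sum_sub_distrib]
    simp only [hlogP]
    rw [habel, hKL, ← Finset.sum_sub_distrib]
    refine Finset.sum_congr rfl fun k _ => ?_
    rcases eq_or_lt_of_le (hp0 k) with h0 | h0
    · rw [← h0]; simp
    · rw [Real.log_div h0.ne' (hq0 k).ne']; ring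
  have hfacts : ∀ u : Matrix (Fin n) (Fin n) ℂ, u ∈ Matrix.unitaryGroup (Fin n) ℂ → ∀ k : Fin n,
      0 < (prim (star u * σ * u) ((k : ℕ) + 1) k.isLt).re ∧
        (prim (star u * σ * u) ((k : ℕ) + 1) k.isLt).re
          ≤ ∏ i : Fin ((k : ℕ) + 1), q (Fin.castLE k.isLt i) := by
    intro u hu k
    have hu1 : star u * u = 1 := Matrix.mem_unitaryGroup_iff'.mp hu
    set V : Matrix (Fin n) (Fin n) ℂ := star w * u with hVdef
    have hV : star V * V = 1 := by
      calc star V * V = star u * (w * star w) * u := by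
            rw [hVdef, StarMul.star_mul, star_star]; simp only [Matrix.mul_assoc]
        _ = 1 := by rw [hw2, mul_one, hu1]
    have hcur : star u * σ * u = star V * D * V := by
      rw [hσw, hVdef, StarMul.star_mul, star_star, hD]
      simp only [Matrix.mul_assoc]
    have hprim : prim (star u * σ * u) ((k : ℕ) + 1) k.isLt
        = ((V.submatrix id (Fin.castLE k.isLt))ᴴ * D * V.submatrix id (Fin.castLE k.isLt)).det := by
      rw [prim, hcur, hD, conj_diag_submatrix]
    have hMM := MhM_one V hV k.isLt
    have hres := det_conj_diag_re q hq0 hq k.isLt (V.submatrix id (Fin.castLE k.isLt)) hMM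
    rw [hprim]
    exact hres
  have hlow : ∀ u : Matrix (Fin n) (Fin n) ℂ, u ∈ Matrix.unitaryGroup (Fin n) ℂ →
      KL ≤ keylRate σ p u := by
    intro u hu
    rw [keylRate, ← hval]
    refine Finset.sum_le_sum fun k _ => ?_
    have hf := hfacts u hu k
    have hm : (p k - pnext p k) * Real.log ((prim (star u * σ * u) ((k : ℕ) + 1) k.isLt).re)
        ≤ (p k - pnext p k) * Real.log (∏ i : Fin ((k : ℕ) + 1), q (Fin.castLE k.isLt i)) :=
      mul_le_mul_of_nonneg_left (Real.log_le_log hf.1 hf.2) (hc k)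
    linarith
  have hvalw : keylRate σ p w = KL := by
    rw [keylRate, ← hval]
    refine Finset.sum_congr rfl fun k _ => ?_
    have hprimw : (prim (star w * σ * w) ((k : ℕ) + 1) k.isLt).re
        = ∏ i : Fin ((k : ℕ) + 1), q (Fin.castLE k.isLt i) := by
      rw [prim, hwσ, Matrix.submatrix_diagonal _ _ (Fin.castLE_injective _), Matrix.det_diagonal]
      rw [show ∏ i : Fin ((k : ℕ) + 1), ((fun i => (q i : ℂ)) ∘ Fin.castLE k.isLt) i
          = ((∏ i : Fin ((k : ℕ) + 1), q (Fin.castLE k.isLt i) : ℝ) : ℂ) from by push_cast; rfl]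
      exact Complex.ofReal_re _
    rw [hprimw]
  refine le_antisymm ?_ (le_ciInf fun u => hlow u.1 u.2)
  have hbdd : BddBelow (Set.range fun u : Matrix.unitaryGroup (Fin n) ℂ =>
      keylRate σ p (u : Matrix (Fin n) (Fin n) ℂ)) := by
    refine ⟨KL, ?_⟩
    rintro x ⟨u, rfl⟩
    exact hlow u.1 u.2
  calc (⨅ u : Matrix.unitaryGroup (Fin n) ℂ, keylRate σ p (u : Matrix (Fin n) (Fin n) ℂ))
      ≤ keylRate σ p ((⟨w, hw⟩ : Matrix.unitaryGroup (Fin n) ℂ) : Matrix (Fin n) (Fin n) ℂ) :=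
        ciInf_le hbdd ⟨w, hw⟩
    _ = KL := hvalw
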